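/- If M satisfies the s-RIP with constant δ, then for any two disjoint subsets S, T ⊆ {1,…,n} with |S| + |T| ≤ s and any vectors u supported on S and w supported on T, |⟨Mu, Mw⟩| ≤ δ·‖u‖₂·‖w‖₂. -/

import Mathlib

open Finset

lemma RIP_core_bound {m n : ℕ} (M : Matrix (Fin m) (Fin n) ℝ) (s : ℕ) (δ : ℝ)
    (hRIP : ∀ z : Fin n → ℝ,
      (Finset.univ.filter (fun i => z i ≠ 0)).card ≤ s →
      (1 - δ) * ∑ i, (z i) ^ 2 ≤ ∑ i, (M.mulVec z i) ^ 2 ∧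
      ∑ i, (M.mulVec z i) ^ 2 ≤ (1 + δ) * ∑ i, (z i) ^ 2)
    (S T : Finset (Fin n)) (hST : Disjoint S T) (hcard : S.card + T.card ≤ s)
    (u w : Fin n → ℝ)
    (hu : ∀ i, i ∉ S → u i = 0) (hw : ∀ i, i ∉ T → w i = 0) :
    ∑ i, M.mulVec u i * M.mulVec w i
      ≤ δ * ((∑ i, (u i) ^ 2) + (∑ i, (w i) ^ 2)) / 2 := by
  have hzero : ∀ i, u i * w i = 0 := by
    intro i
    by_cases hi : i ∈ S
    · rw [hw i (fun h => (Finset.disjoint_left.mp hST) hi h), mul_zero]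
    · rw [hu i hi, zero_mul]
  have hsupp : ∀ (z : Fin n → ℝ), (∀ i, u i = 0 → w i = 0 → z i = 0) →
      (Finset.univ.filter (fun i => z i ≠ 0)).card ≤ s := by
    intro z hz
    refine le_trans (le_trans (Finset.card_le_card (fun i hi => ?_))
      (Finset.card_union_le S T)) hcard
    simp only [Finset.mem_filter, Finset.mem_univ, true_and] at hi
    simp only [Finset.mem_union]
    by_contra hc
    push_neg at hc
    exact hi (hz i (hu i hc.1) (hw i hc.2))
  have hsP := hsupp (u + w) (by intro i h1 h2; simp [h1, h2])
  have hsN := hsupp (u - w) (by intro i h1 h2; simp [h1, h2])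
  have hnP : ∑ i, ((u + w) i) ^ 2 = (∑ i, (u i) ^ 2) + (∑ i, (w i) ^ 2) := by
    rw [← Finset.sum_add_distrib]
    refine Finset.sum_congr rfl fun i _ => ?_
    have := hzero i
    simp only [Pi.add_apply]
    nlinarith [hzero i]
  have hnN : ∑ i, ((u - w) i) ^ 2 = (∑ i, (u i) ^ 2) + (∑ i, (w i) ^ 2) := by
    rw [← Finset.sum_add_distrib]
    refine Finset.sum_congr rfl fun i _ => ?_
    simp only [Pi.sub_apply]
    nlinarith [hzero i]
  have hP := (hRIP (u + w) hsP).2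
  have hN := (hRIP (u - w) hsN).1
  rw [hnP] at hP
  rw [hnN] at hN
  have hid : (∑ i, (M.mulVec (u + w) i) ^ 2) - (∑ i, (M.mulVec (u - w) i) ^ 2)
      = 4 * ∑ i, M.mulVec u i * M.mulVec w i := by
    rw [← Finset.sum_sub_distrib, Finset.mul_sum]
    refine Finset.sum_congr rfl fun i _ => ?_
    rw [Matrix.mulVec_add, Matrix.mulVec_sub]
    simp only [Pi.add_apply, Pi.sub_apply]
    ring
  linarith

theorem RIP_near_orthogonality
    {m n : ℕ} (M : Matrix (Fin m) (Fin n) ℝ) (s : ℕ) (δ : ℝ)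
    (hRIP : ∀ z : Fin n → ℝ,
      (Finset.univ.filter (fun i => z i ≠ 0)).card ≤ s →
      (1 - δ) * ∑ i, (z i) ^ 2 ≤ ∑ i, (M.mulVec z i) ^ 2 ∧
      ∑ i, (M.mulVec z i) ^ 2 ≤ (1 + δ) * ∑ i, (z i) ^ 2)
    (S T : Finset (Fin n)) (hST : Disjoint S T) (hcard : S.card + T.card ≤ s)
    (u w : Fin n → ℝ)
    (hu : ∀ i, i ∉ S → u i = 0) (hw : ∀ i, i ∉ T → w i = 0) :
    |∑ i, M.mulVec u i * M.mulVec w i|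
      ≤ δ * Real.sqrt (∑ i, (u i) ^ 2) * Real.sqrt (∑ i, (w i) ^ 2) := by
  -- general |·| bound for any pair supported on S, T
  have habs : ∀ (a b : Fin n → ℝ), (∀ i, i ∉ S → a i = 0) → (∀ i, i ∉ T → b i = 0) →
      |∑ i, M.mulVec a i * M.mulVec b i|
        ≤ δ * ((∑ i, (a i) ^ 2) + (∑ i, (b i) ^ 2)) / 2 := by
    intro a b ha hb
    rw [abs_le]
    constructor
    · have h := RIP_core_bound M s δ hRIP S T hST hcard a (-b) ha
        (fun i hi => by simp [hb i hi])
      have h1 : ∑ i, M.mulVec a i * M.mulVec (-b) i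
          = -∑ i, M.mulVec a i * M.mulVec b i := by
        rw [← Finset.sum_neg_distrib]
        refine Finset.sum_congr rfl fun i _ => ?_
        rw [Matrix.mulVec_neg]
        simp
      have h2 : ∑ i, ((-b) i) ^ 2 = ∑ i, (b i) ^ 2 := by
        refine Finset.sum_congr rfl fun i _ => ?_
        simp
      rw [h1, h2] at h
      linarith
    · exact RIP_core_bound M s δ hRIP S T hST hcard a b ha hb
  set A := ∑ i, (u i) ^ 2 with hA
  set B := ∑ i, (w i) ^ 2 with hB
  have hA0 : 0 ≤ A := Finset.sum_nonneg fun i _ => sq_nonneg _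
  have hB0 : 0 ≤ B := Finset.sum_nonneg fun i _ => sq_nonneg _
  by_cases hAz : A = 0
  · have hu0 : ∀ i, u i = 0 := by
      intro i
      have := (Finset.sum_eq_zero_iff_of_nonneg (fun i _ => sq_nonneg (u i))).mp hAz i
        (Finset.mem_univ i)
      exact pow_eq_zero_iff (by norm_num) |>.mp this
    have : ∑ i, M.mulVec u i * M.mulVec w i = 0 := by
      refine Finset.sum_eq_zero fun i _ => ?_
      have : M.mulVec u i = 0 := by
        simp [Matrix.mulVec, dotProduct, hu0]
      rw [this, zero_mul]
    rw [this, hAz]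
    simp
  by_cases hBz : B = 0
  · have hw0 : ∀ i, w i = 0 := by
      intro i
      have := (Finset.sum_eq_zero_iff_of_nonneg (fun i _ => sq_nonneg (w i))).mp hBz i
        (Finset.mem_univ i)
      exact pow_eq_zero_iff (by norm_num) |>.mp this
    have : ∑ i, M.mulVec u i * M.mulVec w i = 0 := by
      refine Finset.sum_eq_zero fun i _ => ?_
      have : M.mulVec w i = 0 := by
        simp [Matrix.mulVec, dotProduct, hw0]
      rw [this, mul_zero]
    rw [this, hBz]
    simp
  have hApos : 0 < A := lt_of_le_of_ne hA0 (Ne.symm hAz)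
  have hBpos : 0 < B := lt_of_le_of_ne hB0 (Ne.symm hBz)
  have hsA : 0 < Real.sqrt A := Real.sqrt_pos.mpr hApos
  have hsB : 0 < Real.sqrt B := Real.sqrt_pos.mpr hBpos
  set a : ℝ := Real.sqrt A
  set b : ℝ := Real.sqrt B
  have haa : a ^ 2 = A := Real.sq_sqrt hA0
  have hbb : b ^ 2 = B := Real.sq_sqrt hB0
  -- normalized vectors
  have key := habs (a⁻¹ • u) (b⁻¹ • w)
    (fun i hi => by simp [hu i hi])
    (fun i hi => by simp [hw i hi])
  have hnu : ∑ i, ((a⁻¹ • u) i) ^ 2 = 1 := by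
    simp only [Pi.smul_apply, smul_eq_mul, mul_pow]
    rw [← Finset.mul_sum, ← hA]
    field_simp [ne_of_gt hsA]
    nlinarith
  have hnw : ∑ i, ((b⁻¹ • w) i) ^ 2 = 1 := by
    simp only [Pi.smul_apply, smul_eq_mul, mul_pow]
    rw [← Finset.mul_sum, ← hB]
    field_simp [ne_of_gt hsB]
    nlinarith
  have hinner : ∑ i, M.mulVec (a⁻¹ • u) i * M.mulVec (b⁻¹ • w) i
      = (a⁻¹ * b⁻¹) * ∑ i, M.mulVec u i * M.mulVec w i := by
    rw [Finset.mul_sum]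
    refine Finset.sum_congr rfl fun i _ => ?_
    rw [Matrix.mulVec_smul, Matrix.mulVec_smul]
    simp only [Pi.smul_apply, smul_eq_mul]
    ring
  rw [hnu, hnw, hinner] at key
  rw [abs_mul, abs_mul] at key
  rw [abs_of_pos (inv_pos.mpr hsA), abs_of_pos (inv_pos.mpr hsB)] at key
  have : |∑ i, M.mulVec u i * M.mulVec w i| ≤ δ * (a * b) := by
    have hab : 0 < a * b := mul_pos hsA hsB
    rw [← mul_le_mul_iff_right₀ (inv_pos.mpr hab)]
    calc (a * b)⁻¹ * |∑ i, M.mulVec u i * M.mulVec w i|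
        = a⁻¹ * b⁻¹ * |∑ i, M.mulVec u i * M.mulVec w i| := by
          rw [mul_inv]
      _ ≤ δ * (1 + 1) / 2 := key
      _ = δ := by ring
      _ = (a * b)⁻¹ * (δ * (a * b)) := by field_simp
  linarith [this, le_of_eq (mul_assoc δ a b)]
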